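/- Let π be a policy, π̃ another policy, ω ∈ [0,1], and define the updated policy π' = (1-ω)π + ωπ̃ (pointwise mixture). Let Q : S × A → ℝ and set χ = ‖H Q − H_{π̃} Q‖∞. Then ‖Q* − Q^{π'}‖∞ ≤ (1 − ω(1−γ)) ‖Q* − Q^{π}‖∞ + (2ω/(1−γ)) ‖Q − Q^{π}‖∞ + (ω/(1−γ)) χ. -/

import Mathlib

noncomputable section

/-- A policy assigns to each state a probability distribution over actions. -/
def IsPolicy {S A : Type*} [Fintype A] (π : S → A → ℝ) : Prop :=
  (∀ s a, 0 ≤ π s a) ∧ ∀ s, ∑ a, π s a = 1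

/-- A transition kernel assigns to each state-action pair a probability distribution over states. -/
def IsKernel {S A : Type*} [Fintype S] (p : S → A → S → ℝ) : Prop :=
  (∀ s a s', 0 ≤ p s a s') ∧ ∀ s a, ∑ s', p s a s' = 1

/-- Sup norm on `S × A → ℝ` (functions `S → A → ℝ`). -/
def supNorm {S A : Type*} [Fintype S] [Fintype A] [Nonempty S] [Nonempty A]
    (Q : S → A → ℝ) : ℝ :=
  Finset.univ.sup' Finset.univ_nonempty (fun sa : S × A => |Q sa.1 sa.2|)

/-- Total variation distance between two distributions on a finite set. -/
def dTV {Ω : Type*} [Fintype Ω] (p₁ p₂ : Ω → ℝ) : ℝ :=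
  (∑ x, |p₁ x - p₂ x|) / 2

/-- Weighted ℓ₂ norm with weights ν. -/
def nuNorm {S A : Type*} [Fintype S] [Fintype A] (ν : S → A → ℝ) (Q : S → A → ℝ) : ℝ :=
  Real.sqrt (∑ s, ∑ a, ν s a * (Q s a) ^ 2)

/-- Weighted ℓ₂ inner product with weights ν. -/
def nuInner {S A : Type*} [Fintype S] [Fintype A] (ν : S → A → ℝ) (Q₁ Q₂ : S → A → ℝ) : ℝ :=
  ∑ s, ∑ a, ν s a * Q₁ s a * Q₂ s a

/-- Bellman operator associated with a policy π. -/
def bellman {S A : Type*} [Fintype S] [Fintype A]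
    (p : S → A → S → ℝ) (R : S → A → ℝ) (γ : ℝ) (π : S → A → ℝ)
    (Q : S → A → ℝ) : S → A → ℝ :=
  fun s a => R s a + γ * ∑ s', p s a s' * ∑ a', π s' a' * Q s' a'

/-- Bellman optimality operator. -/
def bellmanOpt {S A : Type*} [Fintype S] [Fintype A] [Nonempty A]
    (p : S → A → S → ℝ) (R : S → A → ℝ) (γ : ℝ)
    (Q : S → A → ℝ) : S → A → ℝ :=
  fun s a => R s a + γ * ∑ s', p s a s' *
    Finset.univ.sup' Finset.univ_nonempty (fun a' => Q s' a')

/-- Expected operator F̄(Q,π) = (I − D)Q + D H_π Q, where D has diagonal entries μ_b(s)π_b(a|s). -/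
def Fbar {S A : Type*} [Fintype S] [Fintype A]
    (p : S → A → S → ℝ) (R : S → A → ℝ) (γ : ℝ)
    (μb : S → ℝ) (πb : S → A → ℝ) (π : S → A → ℝ) (Q : S → A → ℝ) : S → A → ℝ :=
  fun s a => (1 - μb s * πb s a) * Q s a + μb s * πb s a * bellman p R γ π Q s a

/-- Importance-sampling TD operator, for y = ((s₁,a₁),(s₂,a₂)). -/
def FIS {S A : Type*} [Fintype S] [Fintype A] [DecidableEq S] [DecidableEq A]
    (R : S → A → ℝ) (γ : ℝ) (πb : S → A → ℝ)
    (Q : S → A → ℝ) (y : (S × A) × S × A) (π : S → A → ℝ) : S → A → ℝ :=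
  fun s a => if (s, a) = y.1 then
      R y.1.1 y.1.2 + γ * (π y.2.1 y.2.2 / πb y.2.1 y.2.2) * Q y.2.1 y.2.2
    else Q s a

/-- Expected-TD operator, for u = (s₁,a₁,s₂). -/
def FETD {S A : Type*} [Fintype S] [Fintype A] [DecidableEq S] [DecidableEq A]
    (R : S → A → ℝ) (γ : ℝ)
    (Q : S → A → ℝ) (u : S × A × S) (π : S → A → ℝ) : S → A → ℝ :=
  fun s a => if (s, a) = (u.1, u.2.1) then
      R u.1 u.2.1 + γ * ∑ a', π u.2.2 a' * Q u.2.2 a'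
    else Q s a

/-- State transition matrix induced by a policy. -/
def Pmat {S A : Type*} [Fintype A] (p : S → A → S → ℝ) (π : S → A → ℝ) : Matrix S S ℝ :=
  Matrix.of fun s s' => ∑ a, π s a * p s a s'

end

section ActorAux

variable {S A : Type*} [Fintype S] [Fintype A] [Nonempty S] [Nonempty A]

lemma abs_le_supNorm' (f : S → A → ℝ) (s : S) (a : A) : |f s a| ≤ supNorm f :=
  Finset.le_sup' (fun sa : S × A => |f sa.1 sa.2|) (Finset.mem_univ (s, a))

lemma supNorm_nonneg' (f : S → A → ℝ) : 0 ≤ supNorm f := by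
  obtain ⟨s⟩ := (inferInstance : Nonempty S)
  obtain ⟨a⟩ := (inferInstance : Nonempty A)
  exact le_trans (abs_nonneg _) (abs_le_supNorm' f s a)

lemma supNorm_le' (f : S → A → ℝ) (C : ℝ) (h : ∀ s a, |f s a| ≤ C) : supNorm f ≤ C :=
  Finset.sup'_le _ _ fun sa _ => h sa.1 sa.2

lemma wsum_sub_le {ι : Type*} [Fintype ι] (w x y : ι → ℝ) (C : ℝ)
    (hw : ∀ i, 0 ≤ w i) (hs : ∑ i, w i = 1) (hb : ∀ i, x i ≤ y i + C) :
    ∑ i, w i * x i ≤ (∑ i, w i * y i) + C := by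
  calc ∑ i, w i * x i ≤ ∑ i, w i * (y i + C) :=
        Finset.sum_le_sum fun i _ => mul_le_mul_of_nonneg_left (hb i) (hw i)
    _ = (∑ i, w i * y i) + (∑ i, w i) * C := by
        rw [Finset.sum_mul, ← Finset.sum_add_distrib]
        exact Finset.sum_congr rfl fun i _ => by ring
    _ = (∑ i, w i * y i) + C := by rw [hs, one_mul]

lemma bellman_shift (p : S → A → S → ℝ) (hp : IsKernel p) (R : S → A → ℝ)
    (γ : ℝ) (hγ : 0 ≤ γ) (π : S → A → ℝ) (hπ : IsPolicy π)
    (f g : S → A → ℝ) (C : ℝ) (h : ∀ s a, f s a ≤ g s a + C) (s : S) (a : A) :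
    bellman p R γ π f s a ≤ bellman p R γ π g s a + γ * C := by
  have inner : ∀ s', ∑ a', π s' a' * f s' a' ≤ (∑ a', π s' a' * g s' a') + C :=
    fun s' => wsum_sub_le (π s') (fun a' => f s' a') (fun a' => g s' a') C
      (hπ.1 s') (hπ.2 s') (fun a' => h s' a')
  have outer : ∑ s', p s a s' * ∑ a', π s' a' * f s' a'
      ≤ (∑ s', p s a s' * ∑ a', π s' a' * g s' a') + C :=
    wsum_sub_le (p s a) _ _ C (hp.1 s a) (hp.2 s a) inner
  have hm := mul_le_mul_of_nonneg_left outer hγ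
  rw [mul_add] at hm
  simp only [bellman]
  linarith

lemma bellmanOpt_shift (p : S → A → S → ℝ) (hp : IsKernel p) (R : S → A → ℝ)
    (γ : ℝ) (hγ : 0 ≤ γ)
    (f g : S → A → ℝ) (C : ℝ) (h : ∀ s a, f s a ≤ g s a + C) (s : S) (a : A) :
    bellmanOpt p R γ f s a ≤ bellmanOpt p R γ g s a + γ * C := by
  have inner : ∀ s', Finset.univ.sup' Finset.univ_nonempty (fun a' => f s' a')
      ≤ Finset.univ.sup' Finset.univ_nonempty (fun a' => g s' a') + C := by
    intro s'
    apply Finset.sup'_le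
    intro a' _
    exact le_trans (h s' a')
      (add_le_add_left (Finset.le_sup' (fun a' => g s' a') (Finset.mem_univ a')) C)
  have outer : ∑ s', p s a s' * Finset.univ.sup' Finset.univ_nonempty (fun a' => f s' a')
      ≤ (∑ s', p s a s' * Finset.univ.sup' Finset.univ_nonempty (fun a' => g s' a')) + C :=
    wsum_sub_le (p s a) _ _ C (hp.1 s a) (hp.2 s a) inner
  have hm := mul_le_mul_of_nonneg_left outer hγ
  rw [mul_add] at hm
  simp only [bellmanOpt]
  linarith

lemma bellman_le_opt (p : S → A → S → ℝ) (hp : IsKernel p) (R : S → A → ℝ)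
    (γ : ℝ) (hγ : 0 ≤ γ) (π : S → A → ℝ) (hπ : IsPolicy π)
    (f : S → A → ℝ) (s : S) (a : A) :
    bellman p R γ π f s a ≤ bellmanOpt p R γ f s a := by
  have inner : ∀ s', ∑ a', π s' a' * f s' a'
      ≤ Finset.univ.sup' Finset.univ_nonempty (fun a' => f s' a') := by
    intro s'
    have := wsum_sub_le (π s') (fun a' => f s' a') (fun _ => 0)
      (Finset.univ.sup' Finset.univ_nonempty (fun a' => f s' a'))
      (hπ.1 s') (hπ.2 s')
      (fun a' => by
        have := Finset.le_sup' (fun a' => f s' a') (Finset.mem_univ a')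
        simp only [zero_add]; exact this)
    simpa using this
  have outer : ∑ s', p s a s' * ∑ a', π s' a' * f s' a'
      ≤ ∑ s', p s a s' * Finset.univ.sup' Finset.univ_nonempty (fun a' => f s' a') :=
    Finset.sum_le_sum fun s' _ => mul_le_mul_of_nonneg_left (inner s') (hp.1 s a s')
  have hm := mul_le_mul_of_nonneg_left outer hγ
  simp only [bellman, bellmanOpt]
  linarith

lemma bellman_mix (p : S → A → S → ℝ) (R : S → A → ℝ) (γ ω : ℝ) (π πt : S → A → ℝ)
    (f : S → A → ℝ) (s : S) (a : A) :
    bellman p R γ (fun s a => (1 - ω) * π s a + ω * πt s a) f s a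
      = (1 - ω) * bellman p R γ π f s a + ω * bellman p R γ πt f s a := by
  simp only [bellman]
  have inner : ∀ s', ∑ a', ((1 - ω) * π s' a' + ω * πt s' a') * f s' a'
      = (1 - ω) * (∑ a', π s' a' * f s' a') + ω * ∑ a', πt s' a' * f s' a' := by
    intro s'
    rw [Finset.mul_sum, Finset.mul_sum, ← Finset.sum_add_distrib]
    exact Finset.sum_congr rfl fun a' _ => by ring
  simp only [inner]
  rw [show (∑ s', p s a s' * ((1 - ω) * (∑ a', π s' a' * f s' a')
        + ω * ∑ a', πt s' a' * f s' a'))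
      = (1 - ω) * (∑ s', p s a s' * ∑ a', π s' a' * f s' a')
        + ω * ∑ s', p s a s' * ∑ a', πt s' a' * f s' a' from by
    rw [Finset.mul_sum, Finset.mul_sum, ← Finset.sum_add_distrib]
    exact Finset.sum_congr rfl fun s' _ => by ring]
  ring

end ActorAux

/-- One-step actor drift inequality (Proposition 3.1). -/
theorem actor_drift {S A : Type*} [Fintype S] [Fintype A] [Nonempty S] [Nonempty A]
    (p : S → A → S → ℝ) (hp : IsKernel p)
    (R : S → A → ℝ) (hR : ∀ s a, 0 ≤ R s a ∧ R s a ≤ 1)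
    (γ : ℝ) (hγ : 0 < γ ∧ γ < 1)
    (π πt : S → A → ℝ) (hπ : IsPolicy π) (hπt : IsPolicy πt)
    (ω : ℝ) (hω : 0 ≤ ω ∧ ω ≤ 1)
    (Q Qstar Qpi Qpi' : S → A → ℝ)
    (hQstar : bellmanOpt p R γ Qstar = Qstar)
    (hQpi : bellman p R γ π Qpi = Qpi)
    (hQpi' : bellman p R γ (fun s a => (1 - ω) * π s a + ω * πt s a) Qpi' = Qpi')
    (χ : ℝ)
    (hχ : χ = supNorm (fun s a => bellmanOpt p R γ Q s a - bellman p R γ πt Q s a)) :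
    supNorm (fun s a => Qstar s a - Qpi' s a)
      ≤ (1 - ω * (1 - γ)) * supNorm (fun s a => Qstar s a - Qpi s a)
        + (2 * ω / (1 - γ)) * supNorm (fun s a => Q s a - Qpi s a)
        + (ω / (1 - γ)) * χ := by
  obtain ⟨hγ0, hγ1⟩ := hγ
  obtain ⟨hω0, hω1⟩ := hω
  have hγ0' : (0:ℝ) ≤ γ := le_of_lt hγ0
  have h1γ : (0:ℝ) < 1 - γ := by linarith
  set π' : S → A → ℝ := fun s a => (1 - ω) * π s a + ω * πt s a with hπ'def
  have hπ' : IsPolicy π' := by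
    constructor
    · intro s a
      exact add_nonneg (mul_nonneg (by linarith) (hπ.1 s a)) (mul_nonneg hω0 (hπt.1 s a))
    · intro s
      rw [hπ'def]
      rw [Finset.sum_add_distrib, ← Finset.mul_sum, ← Finset.mul_sum, hπ.2 s, hπt.2 s]
      ring
  set e := supNorm (fun s a => Qstar s a - Qpi s a) with he
  set ε := supNorm (fun s a => Q s a - Qpi s a) with hε
  have he0 : 0 ≤ e := by rw [he]; exact supNorm_nonneg' _
  have hε0 : 0 ≤ ε := by rw [hε]; exact supNorm_nonneg' _
  have hχ0 : 0 ≤ χ := by rw [hχ]; exact supNorm_nonneg' _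
  have hQe : ∀ s a, |Qstar s a - Qpi s a| ≤ e := by
    intro s a; rw [he]; exact abs_le_supNorm' (fun s a => Qstar s a - Qpi s a) s a
  have hQε : ∀ s a, |Q s a - Qpi s a| ≤ ε := by
    intro s a; rw [hε]; exact abs_le_supNorm' (fun s a => Q s a - Qpi s a) s a
  have hQχ : ∀ s a, |bellmanOpt p R γ Q s a - bellman p R γ πt Q s a| ≤ χ := by
    intro s a; rw [hχ]; exact abs_le_supNorm' (fun s a => bellmanOpt p R γ Q s a - bellman p R γ πt Q s a) s a
  clear_value π' e ε
  have hmix : ∀ f : S → A → ℝ, ∀ s a, bellman p R γ π' f s a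
      = (1 - ω) * bellman p R γ π f s a + ω * bellman p R γ πt f s a := by
    intro f s a
    rw [hπ'def]
    exact bellman_mix p R γ ω π πt f s a
  -- Step 1 : Qpi' ≤ Qstar pointwise
  have hstep1 : ∀ s a, Qpi' s a ≤ Qstar s a := by
    obtain ⟨sa0, -, hmin⟩ := Finset.exists_min_image Finset.univ
      (fun sa : S × A => Qstar sa.1 sa.2 - Qpi' sa.1 sa.2) Finset.univ_nonempty
    have hm_le : ∀ s a, Qstar sa0.1 sa0.2 - Qpi' sa0.1 sa0.2 ≤ Qstar s a - Qpi' s a := by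
      intro s a; simpa using hmin (s, a) (Finset.mem_univ _)
    have key : ∀ s a, γ * (Qstar sa0.1 sa0.2 - Qpi' sa0.1 sa0.2) ≤ Qstar s a - Qpi' s a := by
      intro s a
      have hb := bellman_shift p hp R γ hγ0' π' hπ' Qpi' Qstar
        (-(Qstar sa0.1 sa0.2 - Qpi' sa0.1 sa0.2))
        (fun s a => by linarith [hm_le s a]) s a
      have hle := bellman_le_opt p hp R γ hγ0' π' hπ' Qstar s a
      have h1 : bellman p R γ π' Qpi' s a = Qpi' s a := congrFun (congrFun hQpi' s) a
      have h2 : bellmanOpt p R γ Qstar s a = Qstar s a := congrFun (congrFun hQstar s) a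
      linarith
    have hmm := key sa0.1 sa0.2
    have hnn : 0 ≤ Qstar sa0.1 sa0.2 - Qpi' sa0.1 sa0.2 := by nlinarith
    intro s a
    linarith [hm_le s a]
  -- Step 2 : lower bounds on Δ := bellman πt Qpi - Qpi
  have hbπt : ∀ s a, bellman p R γ πt Q s a ≤ bellman p R γ πt Qpi s a + γ * ε :=
    bellman_shift p hp R γ hγ0' πt hπt Q Qpi ε
      (fun s a => by have h := abs_le.mp (hQε s a); linarith [h.2])
  have hoptQ : ∀ s a, bellmanOpt p R γ Q s a ≤ bellman p R γ πt Q s a + χ := by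
    intro s a; have h := abs_le.mp (hQχ s a); linarith [h.2]
  have hoptQpi : ∀ s a, bellmanOpt p R γ Qpi s a ≤ bellmanOpt p R γ Q s a + γ * ε :=
    bellmanOpt_shift p hp R γ hγ0' Qpi Q ε
      (fun s a => by have h := abs_le.mp (hQε s a); linarith [h.1])
  have hQpi_le_opt : ∀ s a, Qpi s a ≤ bellmanOpt p R γ Qpi s a := by
    intro s a
    have h1 : bellman p R γ π Qpi s a = Qpi s a := congrFun (congrFun hQpi s) a
    linarith [bellman_le_opt p hp R γ hγ0' π hπ Qpi s a]
  have hΔlb1 : ∀ s a, Qpi s a - (χ + 2 * γ * ε) ≤ bellman p R γ πt Qpi s a := by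
    intro s a
    linarith [hbπt s a, hoptQ s a, hoptQpi s a, hQpi_le_opt s a]
  have hoptQstar : ∀ s a, Qstar s a ≤ bellmanOpt p R γ Qpi s a + γ * e := by
    intro s a
    have h2 : bellmanOpt p R γ Qstar s a = Qstar s a := congrFun (congrFun hQstar s) a
    have h3 := bellmanOpt_shift p hp R γ hγ0' Qstar Qpi e
      (fun s a => by have h := abs_le.mp (hQe s a); linarith [h.2]) s a
    linarith
  have hΔlb2 : ∀ s a, Qstar s a - Qpi s a - (γ * e + (χ + 2 * γ * ε))
      ≤ bellman p R γ πt Qpi s a - Qpi s a := by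
    intro s a
    linarith [hoptQstar s a, hoptQpi s a, hoptQ s a, hbπt s a]
  -- Step 3/4 : g := Qpi' - Qpi and its min m'
  obtain ⟨sb, -, hming⟩ := Finset.exists_min_image Finset.univ
    (fun sa : S × A => Qpi' sa.1 sa.2 - Qpi sa.1 sa.2) Finset.univ_nonempty
  have hm'le : ∀ s a, Qpi' sb.1 sb.2 - Qpi sb.1 sb.2 ≤ Qpi' s a - Qpi s a := by
    intro s a; simpa using hming (s, a) (Finset.mem_univ _)
  have hkey : ∀ s a, ω * (bellman p R γ πt Qpi s a - Qpi s a)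
      + γ * (Qpi' sb.1 sb.2 - Qpi sb.1 sb.2) ≤ Qpi' s a - Qpi s a := by
    intro s a
    have hb := bellman_shift p hp R γ hγ0' π' hπ' Qpi Qpi'
      (-(Qpi' sb.1 sb.2 - Qpi sb.1 sb.2))
      (fun s a => by linarith [hm'le s a]) s a
    have h1 : bellman p R γ π' Qpi' s a = Qpi' s a := congrFun (congrFun hQpi' s) a
    have h2 := hmix Qpi s a
    have h3 : bellman p R γ π Qpi s a = Qpi s a := congrFun (congrFun hQpi s) a
    rw [h3] at h2
    linarith
  have hm'lb : -(ω * (χ + 2 * γ * ε)) / (1 - γ) ≤ Qpi' sb.1 sb.2 - Qpi sb.1 sb.2 := by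
    rw [div_le_iff₀ h1γ]
    have h1 := hkey sb.1 sb.2
    have h2' : -(χ + 2 * γ * ε) ≤ bellman p R γ πt Qpi sb.1 sb.2 - Qpi sb.1 sb.2 := by
      linarith [hΔlb1 sb.1 sb.2]
    have h3 := mul_le_mul_of_nonneg_left h2' hω0
    nlinarith
  -- Step 6 : pointwise final bound
  have hfinal : ∀ s a, Qstar s a - Qpi' s a
      ≤ (1 - ω * (1 - γ)) * e + (ω * (χ + 2 * γ * ε)) / (1 - γ) := by
    intro s a
    have h1 := hkey s a
    have h2 := hΔlb2 s a
    have h5 := mul_le_mul_of_nonneg_left h2 hω0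
    have h6 := mul_le_mul_of_nonneg_left hm'lb hγ0'
    have h4 := (abs_le.mp (hQe s a)).2
    have h7 := mul_le_mul_of_nonneg_left h4 (by linarith : (0:ℝ) ≤ 1 - ω)
    have h8 : ω * (χ + 2 * γ * ε) + γ * ((ω * (χ + 2 * γ * ε)) / (1 - γ))
        = (ω * (χ + 2 * γ * ε)) / (1 - γ) := by
      field_simp
      ring
    have h9 : γ * (-(ω * (χ + 2 * γ * ε)) / (1 - γ))
        = -(γ * ((ω * (χ + 2 * γ * ε)) / (1 - γ))) := by ring
    rw [h9] at h6
    nlinarith [h1, h5, h6, h7, h8]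
  have hbound : supNorm (fun s a => Qstar s a - Qpi' s a)
      ≤ (1 - ω * (1 - γ)) * e + (ω * (χ + 2 * γ * ε)) / (1 - γ) := by
    apply supNorm_le'
    intro s a
    show |Qstar s a - Qpi' s a| ≤ _
    rw [abs_of_nonneg (by linarith [hstep1 s a] : (0:ℝ) ≤ Qstar s a - Qpi' s a)]
    exact hfinal s a
  have key2 : (ω * (χ + 2 * γ * ε)) / (1 - γ) ≤ (2 * ω * ε + ω * χ) / (1 - γ) := by
    rw [div_le_div_iff₀ h1γ h1γ]
    nlinarith [mul_nonneg (mul_nonneg hω0 hε0) (mul_nonneg h1γ.le h1γ.le)]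
  have key3 : (2 * ω * ε + ω * χ) / (1 - γ) = 2 * ω / (1 - γ) * ε + ω / (1 - γ) * χ := by
    field_simp
  linarith [hbound, key2]
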